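/- Let d ≥ 3 be an integer, C₀ > 0, and let V : ℝ^d → [0,∞) be continuous with V(x) = 0 whenever |x| ≥ C₀. Let a > 0 and let w : ℝ^d → ℝ satisfy |w(x)| ≤ K min(|x|^{2−d}, 1) for all x ≠ 0, for some constant K. Suppose v : ℝ^d → ℝ is continuous and satisfies v(x) = −a c₀(d) ∫_{ℝ^d} |x−y|^{2−d} V(y) v(y) dy − a^{−1} w(x) for all x ∈ ℝ^d. Then there exists a constant c'' such that |v(x)| ≤ c'' max(|x|^{2−d}, 1) for all x ≠ 0. -/

import Mathlib

open MeasureTheory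

/-- The surface area `ω_d` of the unit sphere `S^{d-1}` in `ℝ^d`,
computed as `d` times the volume of the unit ball. -/
noncomputable def sphereArea (d : ℕ) : ℝ :=
  d * (volume (Metric.ball (0 : EuclideanSpace ℝ (Fin d)) 1)).toReal

/-- The constant `c₀(d) = ((d-2) ω_d)⁻¹`. -/
noncomputable def czero (d : ℕ) : ℝ := (((d : ℝ) - 2) * sphereArea d)⁻¹

theorem stmt17 (d : ℕ) (hd : 3 ≤ d) (C₀ : ℝ) (hC₀ : 0 < C₀)
    (V : EuclideanSpace ℝ (Fin d) → ℝ) (hVcont : Continuous V) (hV0 : ∀ x, 0 ≤ V x)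
    (hVC₀ : ∀ x, C₀ ≤ ‖x‖ → V x = 0)
    (a : ℝ) (ha : 0 < a)
    (w : EuclideanSpace ℝ (Fin d) → ℝ) (K : ℝ)
    (hw : ∀ x : EuclideanSpace ℝ (Fin d), x ≠ 0 →
      |w x| ≤ K * min (‖x‖ ^ ((2 : ℝ) - d)) 1)
    (v : EuclideanSpace ℝ (Fin d) → ℝ) (hvcont : Continuous v)
    (hveq : ∀ x, v x =
      -a * czero d * (∫ y, ‖x - y‖ ^ ((2 : ℝ) - d) * V y * v y) - a⁻¹ * w x) :
    ∃ c'' : ℝ, ∀ x : EuclideanSpace ℝ (Fin d), x ≠ 0 →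
      |v x| ≤ c'' * max (‖x‖ ^ ((2 : ℝ) - d)) 1 := by
  have hexp : (2 : ℝ) - d ≤ 0 := by
    have : (3 : ℝ) ≤ d := by exact_mod_cast hd
    linarith
  -- bound on w
  set K' := max K 0 with hK'def
  have hK'0 : 0 ≤ K' := le_max_right _ _
  have hwK' : ∀ x : EuclideanSpace ℝ (Fin d), x ≠ 0 → |w x| ≤ K' := by
    intro x hx
    have hmin0 : (0:ℝ) ≤ min (‖x‖ ^ ((2:ℝ) - d)) 1 :=
      le_min (Real.rpow_nonneg (norm_nonneg x) _) zero_le_one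
    have hmin1 : min (‖x‖ ^ ((2:ℝ) - d)) 1 ≤ 1 := min_le_right _ _
    calc |w x| ≤ K * min (‖x‖ ^ ((2:ℝ) - d)) 1 := hw x hx
      _ ≤ K' * min (‖x‖ ^ ((2:ℝ) - d)) 1 :=
          mul_le_mul_of_nonneg_right (le_max_left _ _) hmin0
      _ ≤ K' * 1 := mul_le_mul_of_nonneg_left hmin1 hK'0
      _ = K' := mul_one _
  -- bound on V * v
  have hcs : HasCompactSupport (fun y : EuclideanSpace ℝ (Fin d) => V y * v y) := by
    apply HasCompactSupport.intro (isCompact_closedBall (0 : EuclideanSpace ℝ (Fin d)) C₀)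
    intro y hy
    have : C₀ ≤ ‖y‖ := by
      have := Metric.mem_closedBall.not.mp hy
      simp only [dist_zero_right] at this
      linarith [lt_of_not_ge this]
    simp [hVC₀ y this]
  obtain ⟨M, hM⟩ := hcs.exists_bound_of_continuous (hVcont.mul hvcont)
  have hM' : ∀ y, |V y * v y| ≤ M := hM
  have hM0 : 0 ≤ M := (abs_nonneg _).trans (hM' 0)
  -- bound on v on the closed ball of radius C₀ + 1
  obtain ⟨C₁, hC₁⟩ := (isCompact_closedBall (0 : EuclideanSpace ℝ (Fin d)) (C₀ + 1)
    ).exists_bound_of_continuousOn hvcont.continuousOn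
  -- global bound
  set B := a * |czero d| *
      ((volume (Metric.closedBall (0 : EuclideanSpace ℝ (Fin d)) C₀)).toReal * M)
      + a⁻¹ * K' with hBdef
  have hvb : ∀ x : EuclideanSpace ℝ (Fin d), x ≠ 0 → |v x| ≤ max C₁ B := by
    intro x hx
    by_cases hxs : ‖x‖ ≤ C₀ + 1
    · refine le_trans ?_ (le_max_left _ _)
      exact hC₁ x (by simpa [Metric.mem_closedBall, dist_zero_right] using hxs)
    · push_neg at hxs
      refine le_trans ?_ (le_max_right _ _)
      have hI : |∫ y, ‖x - y‖ ^ ((2 : ℝ) - d) * V y * v y| ≤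
          (volume (Metric.closedBall (0 : EuclideanSpace ℝ (Fin d)) C₀)).toReal * M := by
        have h1 : |∫ y, ‖x - y‖ ^ ((2 : ℝ) - d) * V y * v y| ≤
            ∫ y, |‖x - y‖ ^ ((2 : ℝ) - d) * V y * v y| :=
          by simpa only [Real.norm_eq_abs] using
            norm_integral_le_integral_norm (μ := volume)
              (fun y => ‖x - y‖ ^ ((2 : ℝ) - d) * V y * v y)
        have hint : Integrable ((Metric.closedBall (0 : EuclideanSpace ℝ (Fin d)) C₀
            ).indicator (fun _ => M)) volume := by
          rw [integrable_indicator_iff measurableSet_closedBall]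
          exact integrableOn_const measure_closedBall_lt_top.ne
        have h2 : ∫ y, |‖x - y‖ ^ ((2 : ℝ) - d) * V y * v y| ≤
            ∫ y, (Metric.closedBall (0 : EuclideanSpace ℝ (Fin d)) C₀
              ).indicator (fun _ => M) y := by
          apply integral_mono_of_nonneg
          · filter_upwards with y using abs_nonneg _
          · exact hint
          · filter_upwards with y
            by_cases hy : y ∈ Metric.closedBall (0 : EuclideanSpace ℝ (Fin d)) C₀
            · rw [Set.indicator_of_mem hy]
              have hyn : ‖y‖ ≤ C₀ := by simpa [dist_zero_right] using hy
              have h1le : (1:ℝ) ≤ ‖x - y‖ := by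
                have := norm_sub_norm_le x y
                have h := norm_sub_rev x y
                calc (1:ℝ) = (C₀ + 1) - C₀ := by ring
                  _ ≤ ‖x‖ - ‖y‖ := by linarith
                  _ ≤ ‖x - y‖ := norm_sub_norm_le x y
              have hk1 : ‖x - y‖ ^ ((2:ℝ) - d) ≤ 1 :=
                Real.rpow_le_one_of_one_le_of_nonpos h1le hexp
              have hk0 : 0 ≤ ‖x - y‖ ^ ((2:ℝ) - d) :=
                Real.rpow_nonneg (norm_nonneg _) _
              calc |‖x - y‖ ^ ((2:ℝ) - d) * V y * v y|
                  = ‖x - y‖ ^ ((2:ℝ) - d) * |V y * v y| := by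
                    rw [mul_assoc, abs_mul, abs_of_nonneg hk0]
                _ ≤ 1 * M := mul_le_mul hk1 (hM' y) (abs_nonneg _) zero_le_one
                _ = M := one_mul M
            · rw [Set.indicator_of_notMem hy]
              have hyn : C₀ ≤ ‖y‖ := by
                have := Metric.mem_closedBall.not.mp hy
                simp only [dist_zero_right] at this
                linarith [lt_of_not_ge this]
              simp [hVC₀ y hyn]
        have h3 : ∫ y, (Metric.closedBall (0 : EuclideanSpace ℝ (Fin d)) C₀
              ).indicator (fun _ => M) y =
            (volume (Metric.closedBall (0 : EuclideanSpace ℝ (Fin d)) C₀)).toReal * M := by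
          rw [integral_indicator_const M measurableSet_closedBall]
          simp [smul_eq_mul, Measure.real]
        linarith [h1, h2, h3.le, h3.ge]
      rw [hveq x]
      have habs : |(-a * czero d * (∫ y, ‖x - y‖ ^ ((2 : ℝ) - d) * V y * v y)
          - a⁻¹ * w x)| ≤ a * |czero d| * |∫ y, ‖x - y‖ ^ ((2 : ℝ) - d) * V y * v y|
          + a⁻¹ * |w x| := by
        calc |(-a * czero d * (∫ y, ‖x - y‖ ^ ((2 : ℝ) - d) * V y * v y) - a⁻¹ * w x)|
            ≤ |(-a * czero d * (∫ y, ‖x - y‖ ^ ((2 : ℝ) - d) * V y * v y))|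
              + |a⁻¹ * w x| := abs_sub _ _
          _ = a * |czero d| * |∫ y, ‖x - y‖ ^ ((2 : ℝ) - d) * V y * v y|
              + a⁻¹ * |w x| := by
                rw [abs_mul, abs_mul, abs_mul, abs_neg, abs_of_pos ha,
                  abs_of_pos (inv_pos.mpr ha)]
      refine habs.trans ?_
      have hc0 : 0 ≤ a * |czero d| := by positivity
      have := mul_le_mul_of_nonneg_left hI hc0
      have hw' := mul_le_mul_of_nonneg_left (hwK' x hx) (le_of_lt (inv_pos.mpr ha))
      rw [hBdef]
      linarith
  refine ⟨max (max C₁ B) 0, fun x hx => ?_⟩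
  have hmax1 : (1:ℝ) ≤ max (‖x‖ ^ ((2:ℝ) - d)) 1 := le_max_right _ _
  have hc0 : (0:ℝ) ≤ max (max C₁ B) 0 := le_max_right _ _
  calc |v x| ≤ max C₁ B := hvb x hx
    _ ≤ max (max C₁ B) 0 := le_max_left _ _
    _ = max (max C₁ B) 0 * 1 := (mul_one _).symm
    _ ≤ max (max C₁ B) 0 * max (‖x‖ ^ ((2:ℝ) - d)) 1 :=
        mul_le_mul_of_nonneg_left hmax1 hc0
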